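/- arXiv:2104.06330 — 4 statements merged into one kernel-verified Lean document; each statement's English description precedes it below -/
import Mathlib

section
/- Let ℓ ≥ 2 be an integer, E > 0 and L ∈ ℝ with 0 < |L| < (2ℓE/(ℓ+1))^{(ℓ+1)/(2ℓ)}. Then the equation L²/(2r²) + r^{2ℓ}/(2ℓ) = E has exactly two solutions r in (0, ∞). -/
open Real Set

noncomputable section

/-- For `E > 0` and `0 < |L| < (2ℓE/(ℓ+1))^{(ℓ+1)/(2ℓ)}`, the equation
`L²/(2r²) + r^{2ℓ}/(2ℓ) = E` has exactly two solutions `r` in `(0, ∞)`. -/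
theorem stmt2 (ℓ : ℕ) (hℓ : 2 ≤ ℓ) (E L : ℝ) (hE : 0 < E)
    (hL : 0 < |L|)
    (hL' : |L| < (2 * (ℓ : ℝ) * E / ((ℓ : ℝ) + 1)) ^ (((ℓ : ℝ) + 1) / (2 * (ℓ : ℝ)))) :
    ∃ r₁ r₂ : ℝ, 0 < r₁ ∧ r₁ < r₂ ∧
      {r : ℝ | 0 < r ∧ L ^ 2 / (2 * r ^ 2) + r ^ (2 * ℓ) / (2 * (ℓ : ℝ)) = E}
        = {r₁, r₂} := by
  have hℓR : (0:ℝ) < (ℓ:ℝ) := by exact_mod_cast Nat.lt_of_lt_of_le (by norm_num) hℓ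
  set f : ℝ → ℝ := fun r => L ^ 2 / (2 * r ^ 2) + r ^ (2 * ℓ) / (2 * (ℓ:ℝ)) with hf
  set c : ℝ := |L| ^ (((ℓ:ℝ) + 1)⁻¹) with hcdef
  have hc : 0 < c := rpow_pos_of_pos hL _
  have hcpow : c ^ (ℓ + 1) = |L| := by
    rw [hcdef, ← rpow_natCast (|L| ^ (((ℓ:ℝ) + 1)⁻¹)) (ℓ+1), ← rpow_mul (abs_nonneg L)]
    push_cast
    rw [inv_mul_cancel₀ (by positivity), rpow_one]
  have hcL : c ^ (2 * ℓ + 2) = L ^ 2 := by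
    have : c ^ (2 * ℓ + 2) = (c ^ (ℓ + 1)) ^ 2 := by ring
    rw [this, hcpow, sq_abs]
  -- derivative
  have hder : ∀ r : ℝ, r ≠ 0 → HasDerivAt f (r ^ (2 * ℓ - 1) - L ^ 2 / r ^ 3) r := by
    intro r hr
    have h2r : (2 * r ^ 2 : ℝ) ≠ 0 := by positivity
    have h1 : HasDerivAt (fun r : ℝ => L ^ 2 / (2 * r ^ 2))
        ((0 * (2 * r ^ 2) - L ^ 2 * (2 * (↑2 * r ^ 1))) / (2 * r ^ 2) ^ 2) r :=
      (hasDerivAt_const r (L ^ 2)).div ((hasDerivAt_pow 2 r).const_mul 2) h2r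
    have h2 : HasDerivAt (fun r : ℝ => r ^ (2 * ℓ) / (2 * (ℓ:ℝ)))
        ((↑(2 * ℓ) * r ^ (2 * ℓ - 1)) / (2 * (ℓ:ℝ))) r :=
      (hasDerivAt_pow (2 * ℓ) r).div_const _
    have := h1.add h2
    refine this.congr_deriv ?_
    have hℓ0 : (ℓ:ℝ) ≠ 0 := ne_of_gt hℓR
    push_cast
    field_simp
    ring
  have hcont : ∀ r : ℝ, r ≠ 0 → ContinuousAt f r := fun r hr => (hder r hr).continuousAt
  -- sign of derivative
  have hderneg : ∀ r ∈ Ioo (0:ℝ) c, deriv f r < 0 := by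
    intro r hr
    obtain ⟨hr0, hrc⟩ := hr
    rw [(hder r (ne_of_gt hr0)).deriv]
    have h1 : r ^ (2 * ℓ + 2) < L ^ 2 := by
      rw [← hcL]
      exact pow_lt_pow_left₀ hrc (le_of_lt hr0) (by omega)
    rw [sub_neg, lt_div_iff₀ (by positivity)]
    calc r ^ (2 * ℓ - 1) * r ^ 3 = r ^ (2 * ℓ + 2) := by
          rw [← pow_add]; congr 1; omega
      _ < L ^ 2 := h1
  have hderpos : ∀ r ∈ Ioi c, 0 < deriv f r := by
    intro r hr
    have hrpos : 0 < r := lt_trans hc hr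
    rw [(hder r (ne_of_gt hrpos)).deriv]
    have h1 : L ^ 2 < r ^ (2 * ℓ + 2) := by
      rw [← hcL]
      exact pow_lt_pow_left₀ hr (le_of_lt hc) (by omega)
    rw [sub_pos, div_lt_iff₀ (by positivity)]
    calc L ^ 2 < r ^ (2 * ℓ + 2) := h1
      _ = r ^ (2 * ℓ - 1) * r ^ 3 := by rw [← pow_add]; congr 1; omega
  -- monotonicity
  have hconton : ∀ s : Set ℝ, (∀ x ∈ s, x ≠ 0) → ContinuousOn f s :=
    fun s hs x hx => (hcont x (hs x hx)).continuousWithinAt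
  have hanti : StrictAntiOn f (Ioc 0 c) := by
    apply strictAntiOn_of_deriv_neg (convex_Ioc 0 c)
      (hconton _ (fun x hx => ne_of_gt hx.1))
    rwa [interior_Ioc]
  have hmono : StrictMonoOn f (Ici c) := by
    apply strictMonoOn_of_deriv_pos (convex_Ici c)
      (hconton _ (fun x hx => ne_of_gt (lt_of_lt_of_le hc hx)))
    rwa [interior_Ici]
  -- value at the minimum
  have hL2 : L ^ 2 = c ^ (2 * ℓ) * c ^ 2 := by rw [← pow_add, ← hcL]
  have hfc : f c < E := by
    have hA : (0:ℝ) < 2 * (ℓ:ℝ) * E / ((ℓ:ℝ) + 1) := by positivity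
    set A := 2 * (ℓ:ℝ) * E / ((ℓ:ℝ) + 1) with hAdef
    have key : c ^ (2 * ℓ) < A := by
      have h2 : (c ^ (ℓ + 1)) ^ (2 * ℓ) < (A ^ (((ℓ:ℝ) + 1) / (2 * (ℓ:ℝ)))) ^ (2 * ℓ) := by
        rw [hcpow]
        exact pow_lt_pow_left₀ hL' (abs_nonneg L) (by omega)
      have h3 : (A ^ (((ℓ:ℝ) + 1) / (2 * (ℓ:ℝ)))) ^ (2 * ℓ) = A ^ (ℓ + 1) := by
        rw [← rpow_natCast (A ^ (((ℓ:ℝ) + 1) / (2 * (ℓ:ℝ)))) (2 * ℓ),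
          ← rpow_mul (le_of_lt hA), ← rpow_natCast A (ℓ + 1)]
        congr 1
        push_cast
        rw [div_mul_cancel₀ _ (by positivity : (2 * (ℓ:ℝ)) ≠ 0)]
      rw [h3] at h2
      have h4 : (c ^ (2 * ℓ)) ^ (ℓ + 1) < A ^ (ℓ + 1) := by
        calc (c ^ (2 * ℓ)) ^ (ℓ + 1) = (c ^ (ℓ + 1)) ^ (2 * ℓ) := by
              rw [← pow_mul, ← pow_mul]; ring_nf
          _ < A ^ (ℓ + 1) := h2
      exact lt_of_pow_lt_pow_left₀ (ℓ + 1) (le_of_lt hA) h4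
    have hfceq : f c = c ^ (2 * ℓ) * (((ℓ:ℝ) + 1) / (2 * (ℓ:ℝ))) := by
      simp only [hf]
      rw [hL2]
      have hc2 : (c:ℝ) ^ 2 ≠ 0 := by positivity
      have hℓ0 : (ℓ:ℝ) ≠ 0 := ne_of_gt hℓR
      field_simp
    have key' : c ^ (2 * ℓ) * ((ℓ:ℝ) + 1) < 2 * (ℓ:ℝ) * E := by
      rw [hAdef, lt_div_iff₀ (by positivity)] at key
      linarith
    rw [hfceq, mul_div_assoc', div_lt_iff₀ (by positivity)]
    linarith
  -- find the two roots
  have haux0 : (0:ℝ) ≤ c ^ (2 * ℓ) / (2 * (ℓ:ℝ)) := by positivity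
  -- a : left endpoint
  set a : ℝ := min (c / 2) (|L| / (2 * Real.sqrt E)) with hadef
  have ha0 : 0 < a := lt_min (by positivity) (by positivity)
  have hac : a < c := lt_of_le_of_lt (min_le_left _ _) (by linarith)
  have hfa : E < f a := by
    have h1 : a ≤ |L| / (2 * Real.sqrt E) := min_le_right _ _
    have h2 : a ^ 2 ≤ L ^ 2 / (4 * E) := by
      have := pow_le_pow_left₀ (le_of_lt ha0) h1 2
      calc a ^ 2 ≤ (|L| / (2 * Real.sqrt E)) ^ 2 := this
        _ = L ^ 2 / (4 * E) := by
            rw [div_pow, sq_abs, mul_pow, sq_sqrt (le_of_lt hE)]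
            norm_num
    have h3 : E < L ^ 2 / (2 * a ^ 2) := by
      rw [lt_div_iff₀ (by positivity)]
      rw [le_div_iff₀ (by positivity)] at h2
      have ha2 : (0:ℝ) < a ^ 2 := by positivity
      nlinarith
    have h4 : (0:ℝ) ≤ a ^ (2 * ℓ) / (2 * (ℓ:ℝ)) := by positivity
    calc E < L ^ 2 / (2 * a ^ 2) := h3
      _ ≤ f a := by simp only [hf]; linarith
  -- b : right endpoint
  set b : ℝ := max (c + 1) ((2 * (ℓ:ℝ) * E) ^ ((2 * (ℓ:ℝ))⁻¹) + 1) with hbdef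
  have hcb : c < b := lt_of_lt_of_le (by linarith) (le_max_left _ _)
  have hb0 : 0 < b := lt_trans hc hcb
  have hfb : E < f b := by
    have hX : (0:ℝ) ≤ (2 * (ℓ:ℝ) * E) ^ ((2 * (ℓ:ℝ))⁻¹) := rpow_nonneg (by positivity) _
    have h1 : (2 * (ℓ:ℝ) * E) ^ ((2 * (ℓ:ℝ))⁻¹) < b :=
      lt_of_lt_of_le (by linarith) (le_max_right _ _)
    have h2 : 2 * (ℓ:ℝ) * E < b ^ (2 * ℓ) := by
      have h3 := pow_lt_pow_left₀ h1 hX (n := 2 * ℓ) (by omega)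
      have h4 : ((2 * (ℓ:ℝ) * E) ^ ((2 * (ℓ:ℝ))⁻¹)) ^ (2 * ℓ) = 2 * (ℓ:ℝ) * E := by
        rw [← rpow_natCast ((2 * (ℓ:ℝ) * E) ^ ((2 * (ℓ:ℝ))⁻¹)) (2 * ℓ),
          ← rpow_mul (by positivity)]
        push_cast
        rw [inv_mul_cancel₀ (by positivity), rpow_one]
      rwa [h4] at h3
    have h5 : E < b ^ (2 * ℓ) / (2 * (ℓ:ℝ)) := by
      rw [lt_div_iff₀ (by positivity)]; linarith
    have h6 : (0:ℝ) ≤ L ^ 2 / (2 * b ^ 2) := by positivity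
    calc E < b ^ (2 * ℓ) / (2 * (ℓ:ℝ)) := h5
      _ ≤ f b := by simp only [hf]; linarith
  -- IVT
  obtain ⟨r₁, hr₁mem, hfr₁⟩ : ∃ r₁ ∈ Ioo a c, f r₁ = E := by
    have hsub : Ioo (f c) (f a) ⊆ f '' Ioo a c :=
      intermediate_value_Ioo' (le_of_lt hac)
        (hconton _ (fun x hx => ne_of_gt (lt_of_lt_of_le ha0 hx.1)))
    obtain ⟨r₁, hr₁, hfr₁⟩ := hsub ⟨hfc, hfa⟩
    exact ⟨r₁, hr₁, hfr₁⟩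
  obtain ⟨r₂, hr₂mem, hfr₂⟩ : ∃ r₂ ∈ Ioo c b, f r₂ = E := by
    have hsub : Ioo (f c) (f b) ⊆ f '' Ioo c b :=
      intermediate_value_Ioo (le_of_lt hcb)
        (hconton _ (fun x hx => ne_of_gt (lt_of_lt_of_le hc hx.1)))
    obtain ⟨r₂, hr₂, hfr₂⟩ := hsub ⟨hfc, hfb⟩
    exact ⟨r₂, hr₂, hfr₂⟩
  have hr₁pos : 0 < r₁ := lt_trans ha0 hr₁mem.1
  have hr₁c : r₁ < c := hr₁mem.2
  have hcr₂ : c < r₂ := hr₂mem.1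
  refine ⟨r₁, r₂, hr₁pos, lt_trans hr₁c hcr₂, ?_⟩
  ext r
  simp only [Set.mem_setOf_eq, Set.mem_insert_iff, Set.mem_singleton_iff]
  constructor
  · rintro ⟨hr, hfr⟩
    rcases le_or_gt r c with hrc | hrc
    · left
      exact hanti.injOn ⟨hr, hrc⟩ ⟨hr₁pos, le_of_lt hr₁c⟩ (hfr.trans hfr₁.symm)
    · right
      exact hmono.injOn (le_of_lt hrc) (le_of_lt hcr₂) (hfr.trans hfr₂.symm)
  · rintro (rfl | rfl)
    · exact ⟨hr₁pos, hfr₁⟩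
    · exact ⟨lt_trans hc hcr₂, hfr₂⟩
end
end

section
/- Let ℓ ≥ 2 be an integer. For every (E,L) with E > 0 and 0 < |L| < (2ℓE/(ℓ+1))^{(ℓ+1)/(2ℓ)} and every λ > 0, the pair (λ^{2ℓ/(ℓ+1)} E, λL) also satisfies these conditions, and a_r(λ^{2ℓ/(ℓ+1)} E, λL) = λ · a_r(E, L). -/
open Real

noncomputable section

/-- The effective potential `V*_L(r) = L²/(2r²) + r^{2ℓ}/(2ℓ)`. -/
noncomputable def Veff (ℓ : ℕ) (L r : ℝ) : ℝ :=
  L ^ 2 / (2 * r ^ 2) + r ^ (2 * ℓ) / (2 * (ℓ : ℝ))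

/-- The domain `D* = {(E,L) : E > 0, 0 < |L| < (2ℓE/(ℓ+1))^{(ℓ+1)/(2ℓ)}}`. -/
def Dstar (ℓ : ℕ) : Set (ℝ × ℝ) :=
  {q | 0 < q.1 ∧ 0 < |q.2| ∧
    |q.2| < (2 * (ℓ : ℝ) * q.1 / ((ℓ : ℝ) + 1)) ^ (((ℓ : ℝ) + 1) / (2 * (ℓ : ℝ)))}

/-- The radial action `a_r(E,L) = (√2/π) ∫_{r_m}^{r_M} √(E − V*_L(r)) dr`. -/
noncomputable def aR (ℓ : ℕ) (rm rM : ℝ → ℝ → ℝ) (E L : ℝ) : ℝ :=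
  (Real.sqrt 2 / π) * ∫ r in rm E L..rM E L, Real.sqrt (E - Veff ℓ L r)

/-- The radial action scales like `a_r(λ^{2ℓ/(ℓ+1)}E, λL) = λ a_r(E,L)`. -/
theorem stmt5 (ℓ : ℕ) (hℓ : 2 ≤ ℓ) (rm rM : ℝ → ℝ → ℝ)
    (hroots : ∀ E L : ℝ, (E, L) ∈ Dstar ℓ →
      0 < rm E L ∧ rm E L < rM E L ∧
      Veff ℓ L (rm E L) = E ∧ Veff ℓ L (rM E L) = E ∧
      ∀ r : ℝ, 0 < r → Veff ℓ L r = E → r = rm E L ∨ r = rM E L) :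
    ∀ E L : ℝ, (E, L) ∈ Dstar ℓ → ∀ lam : ℝ, 0 < lam →
      (lam ^ (2 * (ℓ : ℝ) / ((ℓ : ℝ) + 1)) * E, lam * L) ∈ Dstar ℓ ∧
      aR ℓ rm rM (lam ^ (2 * (ℓ : ℝ) / ((ℓ : ℝ) + 1)) * E) (lam * L)
        = lam * aR ℓ rm rM E L := by
  intro E L hEL lam hlam
  obtain ⟨hE, hL, hLlt⟩ := hEL
  have h2 : (2:ℝ) ≤ (ℓ:ℝ) := by exact_mod_cast hℓ
  have hn : (0:ℝ) < (ℓ:ℝ) := by linarith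
  have hn1 : (0:ℝ) < (ℓ:ℝ) + 1 := by linarith
  have hn1' : ((ℓ:ℝ) + 1) ≠ 0 := ne_of_gt hn1
  set μ := lam ^ ((1:ℝ)/((ℓ:ℝ)+1)) with hμdef
  have hμ : 0 < μ := Real.rpow_pos_of_pos hlam _
  set c := lam ^ (2*(ℓ:ℝ)/((ℓ:ℝ)+1)) with hcdef
  have hc : 0 < c := Real.rpow_pos_of_pos hlam _
  have hμc : μ ^ (2*ℓ) = c := by
    rw [hμdef, hcdef, ← Real.rpow_natCast (lam ^ ((1:ℝ)/((ℓ:ℝ)+1))) (2*ℓ),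
      ← Real.rpow_mul hlam.le]
    congr 1; push_cast; field_simp
  have hμ2c : μ^2 * c = lam^2 := by
    rw [hμdef, hcdef, ← Real.rpow_natCast (lam ^ ((1:ℝ)/((ℓ:ℝ)+1))) 2,
      ← Real.rpow_mul hlam.le, ← Real.rpow_add hlam, ← Real.rpow_natCast lam 2]
    congr 1; push_cast; field_simp; ring
  have hV : ∀ r : ℝ, Veff ℓ (lam*L) (μ*r) = c * Veff ℓ L r := by
    intro r
    rcases eq_or_ne r 0 with hr | hr
    · subst hr
      simp only [Veff, mul_zero, zero_pow (by omega : 2*ℓ ≠ 0)]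
      simp
    · simp only [Veff, mul_pow]
      rw [hμc, ← hμ2c]
      field_simp
  have hcrp : c ^ (((ℓ:ℝ)+1)/(2*(ℓ:ℝ))) = lam := by
    rw [hcdef, ← Real.rpow_mul hlam.le,
      show 2*(ℓ:ℝ)/((ℓ:ℝ)+1) * (((ℓ:ℝ)+1)/(2*(ℓ:ℝ))) = 1 from by field_simp,
      Real.rpow_one]
  have hmem : (c*E, lam*L) ∈ Dstar ℓ := by
    refine ⟨mul_pos hc hE, ?_, ?_⟩
    · simp only [abs_mul, abs_of_pos hlam]
      exact mul_pos hlam hL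
    · show |lam * L| < (2 * (ℓ:ℝ) * (c*E) / ((ℓ:ℝ)+1)) ^ (((ℓ:ℝ)+1)/(2*(ℓ:ℝ)))
      rw [abs_mul, abs_of_pos hlam]
      calc lam * |L| < lam * ((2*(ℓ:ℝ)*E/((ℓ:ℝ)+1)) ^ (((ℓ:ℝ)+1)/(2*(ℓ:ℝ)))) :=
            (mul_lt_mul_iff_right₀ hlam).mpr hLlt
        _ = (2*(ℓ:ℝ)*(c*E)/((ℓ:ℝ)+1)) ^ (((ℓ:ℝ)+1)/(2*(ℓ:ℝ))) := by
            rw [show 2*(ℓ:ℝ)*(c*E)/((ℓ:ℝ)+1) = c * (2*(ℓ:ℝ)*E/((ℓ:ℝ)+1)) from by ring,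
              Real.mul_rpow hc.le (by positivity), hcrp]
  obtain ⟨hrm, hlt, hVm, hVM, huniq⟩ := hroots E L ⟨hE, hL, hLlt⟩
  obtain ⟨hrm', hlt', hVm', hVM', huniq'⟩ := hroots (c*E) (lam*L) hmem
  have ha := huniq' (μ * rm E L) (mul_pos hμ hrm) (by rw [hV, hVm])
  have hb := huniq' (μ * rM E L) (mul_pos hμ (hrm.trans hlt)) (by rw [hV, hVM])
  have hab : μ * rm E L < μ * rM E L := (mul_lt_mul_iff_right₀ hμ).mpr hlt
  have hrmeq : μ * rm E L = rm (c*E) (lam*L) ∧ μ * rM E L = rM (c*E) (lam*L) := by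
    rcases ha with ha | ha
    · rcases hb with hb | hb
      · exfalso; rw [ha, hb] at hab; linarith
      · exact ⟨ha, hb⟩
    · exfalso; rcases hb with hb | hb <;> rw [ha, hb] at hab <;> linarith
  have hsub : (∫ r in (μ * rm E L)..(μ * rM E L), Real.sqrt (c*E - Veff ℓ (lam*L) r))
      = μ * ∫ s in rm E L..rM E L, Real.sqrt (c*E - Veff ℓ (lam*L) (μ*s)) := by
    rw [← intervalIntegral.smul_integral_comp_mul_left
      (fun r => Real.sqrt (c*E - Veff ℓ (lam*L) r)) μ, smul_eq_mul]
  have hpt : ∀ s : ℝ, Real.sqrt (c*E - Veff ℓ (lam*L) (μ*s))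
      = Real.sqrt c * Real.sqrt (E - Veff ℓ L s) := by
    intro s
    rw [hV, show c*E - c * Veff ℓ L s = c * (E - Veff ℓ L s) from by ring,
      Real.sqrt_mul hc.le]
  have hfin : μ * Real.sqrt c = lam := by
    rw [hcdef, hμdef, Real.sqrt_eq_rpow, ← Real.rpow_mul hlam.le, ← Real.rpow_add hlam,
      show (1:ℝ)/((ℓ:ℝ)+1) + 2*(ℓ:ℝ)/((ℓ:ℝ)+1) * (1/2) = 1 from by field_simp; ring,
      Real.rpow_one]
  refine ⟨hmem, ?_⟩
  unfold aR
  rw [← hrmeq.1, ← hrmeq.2, hsub]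
  simp only [hpt]
  rw [intervalIntegral.integral_const_mul, ← hfin]
  ring
end
end

section
/- Let ℓ ≥ 2 be an integer and fix L ≠ 0. (i) The map E ↦ a_r(E,L) is strictly increasing on the interval ((ℓ+1)/(2ℓ) · |L|^{2ℓ/(ℓ+1)}, ∞). (ii) Consequently, for all λ > 0 and all E, E' in the respective domains (i.e. E > (ℓ+1)/(2ℓ)|L|^{2ℓ/(ℓ+1)} and E' > (ℓ+1)/(2ℓ)|λL|^{2ℓ/(ℓ+1)}), if a_r(E', λL) = λ · a_r(E, L) then E' = λ^{2ℓ/(ℓ+1)} E. -/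
open Real

noncomputable section

/-- The minimum of the effective potential, `(ℓ+1)/(2ℓ)·|L|^{2ℓ/(ℓ+1)}`. -/
noncomputable def VeffMin (ℓ : ℕ) (L : ℝ) : ℝ :=
  ((ℓ : ℝ) + 1) / (2 * (ℓ : ℝ)) * |L| ^ (2 * (ℓ : ℝ) / ((ℓ : ℝ) + 1))

lemma smul_strictConvexOn {s : Set ℝ} {f : ℝ → ℝ} {c : ℝ} (hc : 0 < c)
    (hf : StrictConvexOn ℝ s f) : StrictConvexOn ℝ s (fun x => c * f x) := by
  refine ⟨hf.1, fun x hx y hy hxy a b ha hb hab => ?_⟩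
  have := hf.2 hx hy hxy ha hb hab
  simp only [smul_eq_mul] at this ⊢
  nlinarith

lemma veff_strictConvex (ℓ : ℕ) (hℓ : 2 ≤ ℓ) (L : ℝ) :
    StrictConvexOn ℝ (Set.Ioi (0:ℝ)) (Veff ℓ L) := by
  have hℓ0 : (0:ℝ) < (ℓ:ℝ) := by
    have : 0 < ℓ := by omega
    exact_mod_cast this
  have h1 : ConvexOn ℝ (Set.Ioi (0:ℝ)) (fun r : ℝ => (L^2/2) * r ^ (-2 : ℤ)) :=
    (convexOn_zpow (-2)).smul (by positivity)
  have h2 : StrictConvexOn ℝ (Set.Ioi (0:ℝ)) (fun r : ℝ => (1/(2*(ℓ:ℝ))) * r ^ (2*ℓ)) := by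
    refine smul_strictConvexOn (by positivity) ?_
    exact ((Even.strictConvexOn_pow (even_two_mul ℓ) (by omega)).subset
      (Set.subset_univ _) (convex_Ioi 0))
  have := h1.add_strictConvexOn h2
  refine this.congr fun r hr => ?_
  simp only [Set.mem_Ioi] at hr
  have hr0 : r ≠ 0 := ne_of_gt hr
  unfold Veff
  simp only [Pi.add_apply, zpow_neg]
  field_simp

lemma veff_between {ℓ : ℕ} (hℓ : 2 ≤ ℓ) {L E x y z : ℝ} (hx : 0 < x) (hxy : x < y)
    (hyz : y < z) (hxE : Veff ℓ L x ≤ E) (hzE : Veff ℓ L z ≤ E) : Veff ℓ L y < E := by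
  have hz : (0:ℝ) < z := lt_trans (lt_trans hx hxy) hyz
  have hmem : y ∈ openSegment ℝ x z := by
    rw [openSegment_eq_Ioo (lt_trans hxy hyz)]
    exact ⟨hxy, hyz⟩
  have := (veff_strictConvex ℓ hℓ L).lt_on_openSegment (Set.mem_Ioi.2 hx)
    (Set.mem_Ioi.2 hz) (ne_of_lt (lt_trans hxy hyz)) hmem
  exact lt_of_lt_of_le this (max_le hxE hzE)

lemma veffMin_pos {ℓ : ℕ} (hℓ : 2 ≤ ℓ) {L : ℝ} (hL : L ≠ 0) : 0 < VeffMin ℓ L := by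
  have hℓ0 : (0:ℝ) < (ℓ:ℝ) := by exact_mod_cast (by omega : 0 < ℓ)
  have hL0 : 0 < |L| := abs_pos.2 hL
  unfold VeffMin
  positivity

lemma mem_Dstar {ℓ : ℕ} (hℓ : 2 ≤ ℓ) {L E : ℝ} (hL : L ≠ 0) (hE : VeffMin ℓ L < E) :
    (E, L) ∈ Dstar ℓ := by
  have hℓ0 : (0:ℝ) < (ℓ:ℝ) := by exact_mod_cast (by omega : 0 < ℓ)
  have hL0 : 0 < |L| := abs_pos.2 hL
  have hE0 : 0 < E := lt_trans (veffMin_pos hℓ hL) hE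
  refine ⟨hE0, hL0, ?_⟩
  have hp : (0:ℝ) < 2 * (ℓ:ℝ) / ((ℓ:ℝ) + 1) := by positivity
  have key : |L| ^ (2 * (ℓ:ℝ) / ((ℓ:ℝ) + 1)) < 2 * (ℓ:ℝ) * E / ((ℓ:ℝ) + 1) := by
    have h1 : ((ℓ:ℝ) + 1) / (2 * (ℓ:ℝ)) > 0 := by positivity
    calc |L| ^ (2 * (ℓ:ℝ) / ((ℓ:ℝ) + 1))
        = (2 * (ℓ:ℝ)) / ((ℓ:ℝ)+1) * VeffMin ℓ L := by
          unfold VeffMin; field_simp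
      _ < (2 * (ℓ:ℝ)) / ((ℓ:ℝ)+1) * E := by
          apply mul_lt_mul_of_pos_left hE (by positivity)
      _ = 2 * (ℓ:ℝ) * E / ((ℓ:ℝ) + 1) := by ring
  have : |L| < (2 * (ℓ:ℝ) * E / ((ℓ:ℝ) + 1)) ^ (((ℓ:ℝ) + 1) / (2 * (ℓ:ℝ))) := by
    rw [show ((ℓ:ℝ) + 1) / (2 * (ℓ:ℝ)) = (2 * (ℓ:ℝ) / ((ℓ:ℝ) + 1))⁻¹ by
      rw [inv_div]]
    exact (Real.lt_rpow_inv_iff_of_pos (abs_nonneg L) (by positivity) hp).2 key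
  exact this

lemma veff_integrable (ℓ : ℕ) (L E : ℝ) {a b : ℝ} (ha : 0 < a) (hab : a ≤ b) :
    IntervalIntegrable (fun r => Real.sqrt (E - Veff ℓ L r)) MeasureTheory.volume a b := by
  apply ContinuousOn.intervalIntegrable
  rw [Set.uIcc_of_le hab]
  apply Real.continuous_sqrt.comp_continuousOn
  apply continuousOn_const.sub
  unfold Veff
  apply ContinuousOn.add
  · apply ContinuousOn.div continuousOn_const (by fun_prop)
    intro r hr
    have : 0 < r := lt_of_lt_of_le ha hr.1
    positivity
  · fun_prop

lemma aR_strictMono (ℓ : ℕ) (hℓ : 2 ≤ ℓ) (rm rM : ℝ → ℝ → ℝ)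
    (hroots : ∀ E L : ℝ, (E, L) ∈ Dstar ℓ →
      0 < rm E L ∧ rm E L < rM E L ∧
      Veff ℓ L (rm E L) = E ∧ Veff ℓ L (rM E L) = E ∧
      ∀ r : ℝ, 0 < r → Veff ℓ L r = E → r = rm E L ∨ r = rM E L)
    (L : ℝ) (hL : L ≠ 0) :
    StrictMonoOn (fun E => aR ℓ rm rM E L) (Set.Ioi (VeffMin ℓ L)) := by
  intro E1 hE1 E2 hE2 h12
  simp only [Set.mem_Ioi] at hE1 hE2
  obtain ⟨hm1, ho1, heqm1, heqM1, -⟩ := hroots E1 L (mem_Dstar hℓ hL hE1)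
  obtain ⟨hm2, ho2, heqm2, heqM2, -⟩ := hroots E2 L (mem_Dstar hℓ hL hE2)
  set a1 := rm E1 L with ha1; set b1 := rM E1 L with hb1
  set a2 := rm E2 L with ha2; set b2 := rM E2 L with hb2
  -- sub-level set bound on [a1, b1]
  have hle1 : ∀ r ∈ Set.Icc a1 b1, Veff ℓ L r ≤ E1 := by
    rintro r ⟨hra, hrb⟩
    rcases eq_or_lt_of_le hra with h | h
    · rw [← h, heqm1]
    rcases eq_or_lt_of_le hrb with h' | h'
    · rw [h', heqM1]
    exact (veff_between hℓ hm1 h h' heqm1.le heqM1.le).le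
  -- containments
  have hca : a2 ≤ a1 := by
    by_contra hc
    push_neg at hc
    have := veff_between hℓ hm1 hc ho2 (heqm1.trans_le h12.le) heqM2.le
    rw [heqm2] at this; exact lt_irrefl _ this
  have hcb : b1 ≤ b2 := by
    by_contra hc
    push_neg at hc
    have := veff_between hℓ hm2 ho2 hc heqm2.le (heqM1.trans_le h12.le)
    rw [heqM2] at this; exact lt_irrefl _ this
  have hb1pos : 0 < b1 := lt_trans hm1 ho1
  -- integrability
  have int1 : IntervalIntegrable (fun r => Real.sqrt (E1 - Veff ℓ L r))
      MeasureTheory.volume a1 b1 := veff_integrable ℓ L E1 hm1 ho1.le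
  have int2a : IntervalIntegrable (fun r => Real.sqrt (E2 - Veff ℓ L r))
      MeasureTheory.volume a2 a1 := veff_integrable ℓ L E2 hm2 hca
  have int2b : IntervalIntegrable (fun r => Real.sqrt (E2 - Veff ℓ L r))
      MeasureTheory.volume a1 b1 := veff_integrable ℓ L E2 hm1 ho1.le
  have int2c : IntervalIntegrable (fun r => Real.sqrt (E2 - Veff ℓ L r))
      MeasureTheory.volume b1 b2 := veff_integrable ℓ L E2 hb1pos hcb
  -- middle comparison
  have hpos : 0 < ∫ r in a1..b1,
      (Real.sqrt (E2 - Veff ℓ L r) - Real.sqrt (E1 - Veff ℓ L r)) := by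
    apply intervalIntegral.intervalIntegral_pos_of_pos_on (int2b.sub int1) _ ho1
    intro x hx
    have hxI : x ∈ Set.Icc a1 b1 := ⟨hx.1.le, hx.2.le⟩
    have h1 : 0 ≤ E1 - Veff ℓ L x := sub_nonneg.2 (hle1 x hxI)
    have h2 : E1 - Veff ℓ L x < E2 - Veff ℓ L x := by linarith
    exact sub_pos.2 (Real.sqrt_lt_sqrt h1 h2)
  rw [intervalIntegral.integral_sub int2b int1] at hpos
  -- splitting
  have e2 : (∫ r in a1..b1, Real.sqrt (E2 - Veff ℓ L r))
      + ∫ r in b1..b2, Real.sqrt (E2 - Veff ℓ L r)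
      = ∫ r in a1..b2, Real.sqrt (E2 - Veff ℓ L r) :=
    intervalIntegral.integral_add_adjacent_intervals int2b int2c
  have e1 : (∫ r in a2..a1, Real.sqrt (E2 - Veff ℓ L r))
      + ∫ r in a1..b2, Real.sqrt (E2 - Veff ℓ L r)
      = ∫ r in a2..b2, Real.sqrt (E2 - Veff ℓ L r) :=
    intervalIntegral.integral_add_adjacent_intervals int2a (int2b.trans int2c)
  have n1 : 0 ≤ ∫ r in a2..a1, Real.sqrt (E2 - Veff ℓ L r) :=
    intervalIntegral.integral_nonneg hca (fun u _ => Real.sqrt_nonneg _)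
  have n2 : 0 ≤ ∫ r in b1..b2, Real.sqrt (E2 - Veff ℓ L r) :=
    intervalIntegral.integral_nonneg hcb (fun u _ => Real.sqrt_nonneg _)
  have hc : 0 < Real.sqrt 2 / π := div_pos (Real.sqrt_pos.2 two_pos) Real.pi_pos
  show aR ℓ rm rM E1 L < aR ℓ rm rM E2 L
  unfold aR
  rw [← ha1, ← hb1, ← ha2, ← hb2]
  apply mul_lt_mul_of_pos_left _ hc
  linarith

lemma veffMin_scale (ℓ : ℕ) (hℓ : 2 ≤ ℓ) {lam : ℝ} (hlam : 0 < lam) (L : ℝ) :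
    VeffMin ℓ (lam * L) = lam ^ (2 * (ℓ:ℝ) / ((ℓ:ℝ) + 1)) * VeffMin ℓ L := by
  unfold VeffMin
  rw [abs_mul, abs_of_pos hlam, Real.mul_rpow hlam.le (abs_nonneg L)]
  ring

lemma veff_scale (ℓ : ℕ) (hℓ : 2 ≤ ℓ) {lam : ℝ} (hlam : 0 < lam) (L r : ℝ) :
    Veff ℓ (lam * L) (lam ^ ((1:ℝ) / ((ℓ:ℝ) + 1)) * r)
      = lam ^ (2 * (ℓ:ℝ) / ((ℓ:ℝ) + 1)) * Veff ℓ L r := by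
  have hℓ0 : (0:ℝ) < (ℓ:ℝ) := by exact_mod_cast (by omega : 0 < ℓ)
  have hℓ1 : ((ℓ:ℝ) + 1) ≠ 0 := by positivity
  set μ := lam ^ ((1:ℝ) / ((ℓ:ℝ) + 1)) with hμ
  set σ := lam ^ (2 * (ℓ:ℝ) / ((ℓ:ℝ) + 1)) with hσ
  have hμ0 : 0 < μ := Real.rpow_pos_of_pos hlam _
  have h2ℓ : 2 * ℓ ≠ 0 := by omega
  rcases eq_or_ne r 0 with rfl | hr
  · simp [Veff, zero_pow h2ℓ, mul_zero]
  have h1 : μ ^ (2 * ℓ) = σ := by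
    rw [hμ, hσ, ← Real.rpow_natCast (lam ^ ((1:ℝ) / ((ℓ:ℝ) + 1))) (2 * ℓ),
      ← Real.rpow_mul hlam.le]
    congr 1
    push_cast
    field_simp
  have h2 : lam ^ 2 = σ * μ ^ 2 := by
    rw [hμ, hσ, ← Real.rpow_natCast (lam ^ ((1:ℝ) / ((ℓ:ℝ) + 1))) 2,
      ← Real.rpow_mul hlam.le, ← Real.rpow_add hlam, ← Real.rpow_natCast lam 2]
    congr 1
    push_cast
    field_simp
  unfold Veff
  rw [mul_pow lam L, mul_pow μ r, mul_pow μ r, h1, h2]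
  field_simp

lemma aR_scale (ℓ : ℕ) (hℓ : 2 ≤ ℓ) (rm rM : ℝ → ℝ → ℝ)
    (hroots : ∀ E L : ℝ, (E, L) ∈ Dstar ℓ →
      0 < rm E L ∧ rm E L < rM E L ∧
      Veff ℓ L (rm E L) = E ∧ Veff ℓ L (rM E L) = E ∧
      ∀ r : ℝ, 0 < r → Veff ℓ L r = E → r = rm E L ∨ r = rM E L)
    (L : ℝ) (hL : L ≠ 0) {lam : ℝ} (hlam : 0 < lam) {E : ℝ} (hE : VeffMin ℓ L < E) :
    aR ℓ rm rM (lam ^ (2 * (ℓ:ℝ) / ((ℓ:ℝ) + 1)) * E) (lam * L) = lam * aR ℓ rm rM E L := by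
  have hℓ0 : (0:ℝ) < (ℓ:ℝ) := by exact_mod_cast (by omega : 0 < ℓ)
  have hℓ1 : ((ℓ:ℝ) + 1) ≠ 0 := by positivity
  set μ := lam ^ ((1:ℝ) / ((ℓ:ℝ) + 1)) with hμ
  set σ := lam ^ (2 * (ℓ:ℝ) / ((ℓ:ℝ) + 1)) with hσ
  have hμ0 : 0 < μ := Real.rpow_pos_of_pos hlam _
  have hσ0 : 0 < σ := Real.rpow_pos_of_pos hlam _
  have hL' : lam * L ≠ 0 := mul_ne_zero (ne_of_gt hlam) hL
  have hE' : VeffMin ℓ (lam * L) < σ * E := by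
    rw [veffMin_scale ℓ hℓ hlam L]
    exact mul_lt_mul_of_pos_left hE hσ0
  obtain ⟨hm, ho, heqm, heqM, -⟩ := hroots E L (mem_Dstar hℓ hL hE)
  obtain ⟨hm', ho', -, -, huniq⟩ := hroots (σ * E) (lam * L) (mem_Dstar hℓ hL' hE')
  have hrm : rm (σ * E) (lam * L) = μ * rm E L ∧ rM (σ * E) (lam * L) = μ * rM E L := by
    have c1 : Veff ℓ (lam * L) (μ * rm E L) = σ * E := by
      rw [veff_scale ℓ hℓ hlam, heqm]
    have c2 : Veff ℓ (lam * L) (μ * rM E L) = σ * E := by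
      rw [veff_scale ℓ hℓ hlam, heqM]
    have d1 := huniq _ (by positivity) c1
    have d2 := huniq _ (mul_pos hμ0 (lt_trans hm ho)) c2
    have hlt : μ * rm E L < μ * rM E L := mul_lt_mul_of_pos_left ho hμ0
    rcases d1 with d1 | d1 <;> rcases d2 with d2 | d2
    · constructor <;> linarith
    · constructor <;> linarith
    · exfalso; linarith
    · exfalso; linarith
  unfold aR
  rw [hrm.1, hrm.2]
  have hsub : (∫ r in μ * rm E L..μ * rM E L, Real.sqrt (σ * E - Veff ℓ (lam * L) r))
      = μ • ∫ x in rm E L..rM E L, Real.sqrt (σ * E - Veff ℓ (lam * L) (μ * x)) :=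
    (intervalIntegral.smul_integral_comp_mul_left _ μ).symm
  rw [hsub]
  have hptw : ∀ x : ℝ, Real.sqrt (σ * E - Veff ℓ (lam * L) (μ * x))
      = Real.sqrt σ * Real.sqrt (E - Veff ℓ L x) := by
    intro x
    rw [veff_scale ℓ hℓ hlam, ← mul_sub, Real.sqrt_mul hσ0.le]
  simp only [hptw]
  rw [intervalIntegral.integral_const_mul]
  have hμσ : μ * Real.sqrt σ = lam := by
    rw [hμ, hσ, Real.sqrt_eq_rpow, ← Real.rpow_mul hlam.le, ← Real.rpow_add hlam]
    rw [show (1:ℝ)/((ℓ:ℝ)+1) + 2*(ℓ:ℝ)/((ℓ:ℝ)+1)*(1/2) = (1:ℝ) by field_simp; ring]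
    exact Real.rpow_one lam
  rw [smul_eq_mul]
  calc Real.sqrt 2 / π * (μ * (Real.sqrt σ * ∫ x in rm E L..rM E L,
        Real.sqrt (E - Veff ℓ L x)))
      = (μ * Real.sqrt σ) * (Real.sqrt 2 / π * ∫ x in rm E L..rM E L,
        Real.sqrt (E - Veff ℓ L x)) := by ring
    _ = lam * (Real.sqrt 2 / π * ∫ x in rm E L..rM E L,
        Real.sqrt (E - Veff ℓ L x)) := by rw [hμσ]

/-- (i) For fixed `L ≠ 0`, `E ↦ a_r(E,L)` is strictly increasing on `(min V*_L, ∞)`;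
(ii) if `a_r(E', λL) = λ a_r(E,L)` then `E' = λ^{2ℓ/(ℓ+1)} E`. -/
theorem stmt6 (ℓ : ℕ) (hℓ : 2 ≤ ℓ) (rm rM : ℝ → ℝ → ℝ)
    (hroots : ∀ E L : ℝ, (E, L) ∈ Dstar ℓ →
      0 < rm E L ∧ rm E L < rM E L ∧
      Veff ℓ L (rm E L) = E ∧ Veff ℓ L (rM E L) = E ∧
      ∀ r : ℝ, 0 < r → Veff ℓ L r = E → r = rm E L ∨ r = rM E L)
    (L : ℝ) (hL : L ≠ 0) :
    StrictMonoOn (fun E => aR ℓ rm rM E L) (Set.Ioi (VeffMin ℓ L)) ∧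
    ∀ lam : ℝ, 0 < lam → ∀ E E' : ℝ,
      VeffMin ℓ L < E → VeffMin ℓ (lam * L) < E' →
      aR ℓ rm rM E' (lam * L) = lam * aR ℓ rm rM E L →
      E' = lam ^ (2 * (ℓ : ℝ) / ((ℓ : ℝ) + 1)) * E := by
  refine ⟨aR_strictMono ℓ hℓ rm rM hroots L hL, ?_⟩
  intro lam hlam E E' hE hE' haR
  have hσ0 : 0 < lam ^ (2 * (ℓ:ℝ) / ((ℓ:ℝ) + 1)) := Real.rpow_pos_of_pos hlam _
  have hsc := aR_scale ℓ hℓ rm rM hroots L hL hlam hE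
  have hE'' : VeffMin ℓ (lam * L) < lam ^ (2 * (ℓ:ℝ) / ((ℓ:ℝ) + 1)) * E := by
    rw [veffMin_scale ℓ hℓ hlam]
    exact mul_lt_mul_of_pos_left hE hσ0
  exact (aR_strictMono ℓ hℓ rm rM hroots (lam * L)
    (mul_ne_zero (ne_of_gt hlam) hL)).injOn (Set.mem_Ioi.2 hE') (Set.mem_Ioi.2 hE'')
    (haR.trans hsc.symm)
end
end

section
/- Let ℓ ≥ 2 be an integer. Let h₀(x,ξ) := ‖ξ‖²/2 + ‖x‖^{2ℓ}/(2ℓ) and a₂(x,ξ) := x₁ξ₂ − x₂ξ₁ on ℝ² × ℝ². For every (x,ξ) with a₂(x,ξ) ≠ 0 and |a₂(x,ξ)| < (2ℓ h₀(x,ξ)/(ℓ+1))^{(ℓ+1)/(2ℓ)}, define A(x,ξ) := a_r(h₀(x,ξ), a₂(x,ξ)). Then for every λ > 0, the scaled point (λx, λ^ℓ ξ) satisfies the same conditions and A(λx, λ^ℓ ξ) = λ^{ℓ+1} A(x,ξ); that is, the radial action is quasi-homogeneous of degree ℓ+1 as a function of (x,ξ). -/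
open Real

noncomputable section

abbrev E2 := EuclideanSpace ℝ (Fin 2)
abbrev Phase := E2 × E2

/-- The anharmonic Hamiltonian `h₀(x,ξ) = ‖ξ‖²/2 + ‖x‖^{2ℓ}/(2ℓ)`. -/
noncomputable def h0fun (ℓ : ℕ) (p : Phase) : ℝ :=
  ‖p.2‖ ^ 2 / 2 + ‖p.1‖ ^ (2 * ℓ) / (2 * (ℓ : ℝ))

/-- The angular momentum `a₂(x,ξ) = x₁ξ₂ − x₂ξ₁`. -/
noncomputable def a2fun (p : Phase) : ℝ :=
  p.1 0 * p.2 1 - p.1 1 * p.2 0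

/-! ### Auxiliary scaling lemmas -/

lemma Veff_scale (ℓ : ℕ) {lam : ℝ} (hlam : 0 < lam) (L r : ℝ) :
    Veff ℓ (lam ^ (ℓ + 1) * L) (lam * r) = lam ^ (2 * ℓ) * Veff ℓ L r := by
  unfold Veff
  have h1 : (lam ^ (ℓ + 1) * L) ^ 2 / (2 * (lam * r) ^ 2)
      = lam ^ (2 * ℓ) * (L ^ 2 / (2 * r ^ 2)) := by
    have h2 : (lam ^ (ℓ + 1) * L) ^ 2 = lam ^ 2 * (lam ^ (2 * ℓ) * L ^ 2) := by ring
    rw [h2, show (2 : ℝ) * (lam * r) ^ 2 = lam ^ 2 * (2 * r ^ 2) by ring,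
      mul_div_mul_left _ _ (by positivity : (lam : ℝ) ^ 2 ≠ 0), mul_div_assoc]
  rw [h1, mul_pow, mul_add, mul_div_assoc]

lemma h0_scale (ℓ : ℕ) {lam : ℝ} (hlam : 0 < lam) (p : Phase) :
    h0fun ℓ (lam • p.1, lam ^ ℓ • p.2) = lam ^ (2 * ℓ) * h0fun ℓ p := by
  unfold h0fun
  have h2 : ‖lam ^ ℓ • p.2‖ = lam ^ ℓ * ‖p.2‖ := by
    rw [norm_smul, Real.norm_eq_abs, abs_of_nonneg (by positivity)]
  have h1 : ‖lam • p.1‖ = lam * ‖p.1‖ := by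
    rw [norm_smul, Real.norm_eq_abs, abs_of_nonneg hlam.le]
  simp only [h1, h2, mul_pow]
  rw [show (lam ^ ℓ) ^ 2 = lam ^ (2 * ℓ) by ring,
    show lam ^ (2 * ℓ) * ‖p.2‖ ^ 2 / 2 = lam ^ (2 * ℓ) * (‖p.2‖ ^ 2 / 2) by ring,
    mul_add, mul_div_assoc]

lemma a2_scale (ℓ : ℕ) (lam : ℝ) (p : Phase) :
    a2fun (lam • p.1, lam ^ ℓ • p.2) = lam ^ (ℓ + 1) * a2fun p := by
  unfold a2fun
  simp only [PiLp.smul_apply, smul_eq_mul]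
  ring

lemma h0_pos (ℓ : ℕ) (p : Phase) (ha : a2fun p ≠ 0) : 0 < h0fun ℓ p := by
  have hp2 : p.2 ≠ 0 := by
    intro h
    apply ha
    unfold a2fun
    rw [h]
    simp
  have hn : 0 < ‖p.2‖ := norm_pos_iff.mpr hp2
  unfold h0fun
  have h1 : 0 < ‖p.2‖ ^ 2 / 2 := by positivity
  have h2 : 0 ≤ ‖p.1‖ ^ (2 * ℓ) / (2 * (ℓ : ℝ)) :=
    div_nonneg (by positivity) (by positivity)
  linarith

lemma rpow_scale (ℓ : ℕ) (hℓ : 2 ≤ ℓ) {lam E : ℝ} (hlam : 0 < lam) (hE : 0 ≤ E) :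
    (2 * (ℓ : ℝ) * (lam ^ (2 * ℓ) * E) / ((ℓ : ℝ) + 1))
        ^ (((ℓ : ℝ) + 1) / (2 * (ℓ : ℝ)))
      = lam ^ (ℓ + 1) *
        (2 * (ℓ : ℝ) * E / ((ℓ : ℝ) + 1)) ^ (((ℓ : ℝ) + 1) / (2 * (ℓ : ℝ))) := by
  have hℓ0 : (0 : ℝ) < (ℓ : ℝ) := by
    have : 0 < ℓ := lt_of_lt_of_le (by norm_num) hℓ
    exact_mod_cast this
  have hbase : (0 : ℝ) ≤ 2 * (ℓ : ℝ) * E / ((ℓ : ℝ) + 1) := by positivity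
  have h1 : 2 * (ℓ : ℝ) * (lam ^ (2 * ℓ) * E) / ((ℓ : ℝ) + 1)
      = lam ^ (2 * ℓ) * (2 * (ℓ : ℝ) * E / ((ℓ : ℝ) + 1)) := by ring
  rw [h1, Real.mul_rpow (by positivity) hbase]
  congr 1
  rw [← Real.rpow_natCast lam (2 * ℓ), ← Real.rpow_natCast lam (ℓ + 1),
    ← Real.rpow_mul hlam.le]
  congr 1
  push_cast
  field_simp

lemma Dstar_scale (ℓ : ℕ) (hℓ : 2 ≤ ℓ) {lam E L : ℝ} (hlam : 0 < lam)
    (hmem : (E, L) ∈ Dstar ℓ) :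
    (lam ^ (2 * ℓ) * E, lam ^ (ℓ + 1) * L) ∈ Dstar ℓ := by
  obtain ⟨hE, hL, hlt⟩ := hmem
  refine ⟨by positivity, ?_, ?_⟩ <;>
    rw [abs_mul, abs_of_nonneg (by positivity : (0:ℝ) ≤ lam ^ (ℓ + 1))]
  · positivity
  · rw [rpow_scale ℓ hℓ hlam hE.le]
    exact (mul_lt_mul_iff_right₀ (by positivity)).mpr hlt

lemma roots_scale (ℓ : ℕ) (hℓ : 2 ≤ ℓ) (rm rM : ℝ → ℝ → ℝ)
    (hroots : ∀ E L : ℝ, (E, L) ∈ Dstar ℓ →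
      0 < rm E L ∧ rm E L < rM E L ∧
      Veff ℓ L (rm E L) = E ∧ Veff ℓ L (rM E L) = E ∧
      ∀ r : ℝ, 0 < r → Veff ℓ L r = E → r = rm E L ∨ r = rM E L)
    {lam E L : ℝ} (hlam : 0 < lam) (hmem : (E, L) ∈ Dstar ℓ) :
    rm (lam ^ (2 * ℓ) * E) (lam ^ (ℓ + 1) * L) = lam * rm E L ∧
    rM (lam ^ (2 * ℓ) * E) (lam ^ (ℓ + 1) * L) = lam * rM E L := by
  obtain ⟨hm, hmM, hVm, hVM, _⟩ := hroots E L hmem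
  obtain ⟨hm', hmM', _, _, huniq'⟩ :=
    hroots (lam ^ (2 * ℓ) * E) (lam ^ (ℓ + 1) * L) (Dstar_scale ℓ hℓ hlam hmem)
  have hVm' : Veff ℓ (lam ^ (ℓ + 1) * L) (lam * rm E L) = lam ^ (2 * ℓ) * E := by
    rw [Veff_scale ℓ hlam, hVm]
  have hVM' : Veff ℓ (lam ^ (ℓ + 1) * L) (lam * rM E L) = lam ^ (2 * ℓ) * E := by
    rw [Veff_scale ℓ hlam, hVM]
  have h1 := huniq' (lam * rm E L) (mul_pos hlam hm) hVm'
  have h2 := huniq' (lam * rM E L) (mul_pos hlam (hm.trans hmM)) hVM'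
  have hlt : lam * rm E L < lam * rM E L := by
    exact (mul_lt_mul_iff_right₀ hlam).mpr hmM
  rcases h1 with h1 | h1
  · rcases h2 with h2 | h2
    · exfalso; rw [← h1] at h2; exact absurd h2 (ne_of_gt hlt)
    · exact ⟨h1.symm, h2.symm⟩
  · exfalso
    rcases h2 with h2 | h2 <;> rw [h1] at hlt
    · rw [h2] at hlt; exact absurd hlt (not_lt.mpr hmM'.le)
    · rw [h2] at hlt; exact lt_irrefl _ hlt

/-- The radial action `A(x,ξ) := a_r(h₀(x,ξ), a₂(x,ξ))` is quasi-homogeneous of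
degree `ℓ+1` as a function of `(x,ξ)`. -/
theorem stmt7 (ℓ : ℕ) (hℓ : 2 ≤ ℓ) (rm rM : ℝ → ℝ → ℝ)
    (hroots : ∀ E L : ℝ, (E, L) ∈ Dstar ℓ →
      0 < rm E L ∧ rm E L < rM E L ∧
      Veff ℓ L (rm E L) = E ∧ Veff ℓ L (rM E L) = E ∧
      ∀ r : ℝ, 0 < r → Veff ℓ L r = E → r = rm E L ∨ r = rM E L) :
    ∀ p : Phase, a2fun p ≠ 0 →
      |a2fun p| < (2 * (ℓ : ℝ) * h0fun ℓ p / ((ℓ : ℝ) + 1))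
          ^ (((ℓ : ℝ) + 1) / (2 * (ℓ : ℝ))) →
      ∀ lam : ℝ, 0 < lam →
        (a2fun (lam • p.1, lam ^ ℓ • p.2) ≠ 0 ∧
         |a2fun (lam • p.1, lam ^ ℓ • p.2)| <
           (2 * (ℓ : ℝ) * h0fun ℓ (lam • p.1, lam ^ ℓ • p.2) / ((ℓ : ℝ) + 1))
             ^ (((ℓ : ℝ) + 1) / (2 * (ℓ : ℝ)))) ∧
        aR ℓ rm rM (h0fun ℓ (lam • p.1, lam ^ ℓ • p.2)) (a2fun (lam • p.1, lam ^ ℓ • p.2))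
          = lam ^ (ℓ + 1) * aR ℓ rm rM (h0fun ℓ p) (a2fun p) := by
  intro p ha hlt lam hlam
  set E := h0fun ℓ p with hE
  set L := a2fun p with hL
  have hEpos : 0 < E := h0_pos ℓ p ha
  have hmem : (E, L) ∈ Dstar ℓ := ⟨hEpos, abs_pos.mpr ha, hlt⟩
  have hh0 : h0fun ℓ (lam • p.1, lam ^ ℓ • p.2) = lam ^ (2 * ℓ) * E := h0_scale ℓ hlam p
  have ha2 : a2fun (lam • p.1, lam ^ ℓ • p.2) = lam ^ (ℓ + 1) * L := a2_scale ℓ lam p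
  have hmem' := Dstar_scale ℓ hℓ hlam hmem
  constructor
  · rw [hh0, ha2]
    obtain ⟨-, h1, h2⟩ := hmem'
    exact ⟨abs_pos.mp h1, h2⟩
  · rw [hh0, ha2]
    obtain ⟨hrm, hrM⟩ := roots_scale ℓ hℓ rm rM hroots hlam hmem
    unfold aR
    rw [hrm, hrM]
    have key : ∀ x : ℝ, Real.sqrt (lam ^ (2 * ℓ) * E - Veff ℓ (lam ^ (ℓ + 1) * L) (lam * x))
        = lam ^ ℓ * Real.sqrt (E - Veff ℓ L x) := by
      intro x
      rw [Veff_scale ℓ hlam, ← mul_sub, show lam ^ (2 * ℓ) = (lam ^ ℓ) ^ 2 by ring,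
        Real.sqrt_mul (sq_nonneg _), Real.sqrt_sq (by positivity)]
    have hint : (∫ r in lam * rm E L..lam * rM E L,
          Real.sqrt (lam ^ (2 * ℓ) * E - Veff ℓ (lam ^ (ℓ + 1) * L) r))
        = lam • ∫ x in rm E L..rM E L,
          Real.sqrt (lam ^ (2 * ℓ) * E - Veff ℓ (lam ^ (ℓ + 1) * L) (lam * x)) :=
      (intervalIntegral.smul_integral_comp_mul_left _ lam).symm
    rw [hint]
    simp only [key]
    rw [intervalIntegral.integral_const_mul, smul_eq_mul]
    ring

end
end
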